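/- Let c > 0 and β < 0, and let Ω(c, β) = min_{λ>0} f_{c,β}(λ). For each g > Ω(c, β) let λ̲(g) < λ̄(g) denote the two solutions λ > 0 of f_{c,β}(λ) = g. Then lim_{g→∞} λ̄(g)/g = e^{−c/2}/(2|β|) and lim_{g→∞} √g · λ̲(g) = (1/2)√((e^{c/2} − 1)/π). -/

import Mathlib

set_option maxHeartbeats 1600000

open Real Filter Set

/-- `ρ_c(λ) = (e^{2πλ} - 1)/(e^{2πλ + c/2} - 1)`. -/
noncomputable def rhoC (c lam : ℝ) : ℝ :=
  (Real.exp (2 * Real.pi * lam) - 1) / (Real.exp (2 * Real.pi * lam + c / 2) - 1)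

/-- `f_{c,β}(λ) = (1 - 4βλ²)/(2λ ρ_c(λ))`. -/
noncomputable def fCB (c β lam : ℝ) : ℝ := (1 - 4 * β * lam ^ 2) / (2 * lam * rhoC c lam)

noncomputable def Faux (c β lam : ℝ) : ℝ :=
  (1 - 4 * β * lam ^ 2) * (Real.exp (c / 2) * Real.exp (2 * Real.pi * lam) - 1) /
    (2 * lam * (Real.exp (2 * Real.pi * lam) - 1))

lemma exp_sub_one_pos {x : ℝ} (hx : 0 < x) : 0 < Real.exp x - 1 := by
  have := Real.add_one_lt_exp (x := x) (by positivity)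
  linarith

lemma aE_sub_one_pos {c lam : ℝ} (hc : 0 < c) (hl : 0 < lam) :
    0 < Real.exp (c / 2) * Real.exp (2 * Real.pi * lam) - 1 := by
  have h1 : (1:ℝ) < Real.exp (c / 2) := by rw [Real.one_lt_exp_iff]; positivity
  have h2 : (1:ℝ) < Real.exp (2 * Real.pi * lam) :=
    by rw [Real.one_lt_exp_iff]; positivity
  nlinarith

lemma fCB_eq {c β : ℝ} (hc : 0 < c) {lam : ℝ} (hl : 0 < lam) :
    fCB c β lam = Faux c β lam := by
  have hP : 0 < Real.exp (2 * Real.pi * lam) - 1 := exp_sub_one_pos (by positivity)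
  have hQ : 0 < Real.exp (c / 2) * Real.exp (2 * Real.pi * lam) - 1 := aE_sub_one_pos hc hl
  have hQ' : Real.exp (2 * Real.pi * lam + c / 2)
      = Real.exp (c / 2) * Real.exp (2 * Real.pi * lam) := by
    rw [Real.exp_add]; ring
  unfold fCB rhoC Faux
  rw [hQ']
  field_simp

lemma Faux_split {c β lam : ℝ} (hl : 0 < lam) :
    Faux c β lam = ((1 - 4 * β * lam ^ 2) / (2 * lam)) *
      ((Real.exp (c / 2) * Real.exp (2 * Real.pi * lam) - 1) /
        (Real.exp (2 * Real.pi * lam) - 1)) := by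
  unfold Faux
  rw [div_mul_div_comm]

lemma left_anti {c β : ℝ} (hc : 0 < c) (hβ : β < 0) {l1 l2 : ℝ}
    (h1 : 0 < l1) (h12 : l1 < l2) (hsm : 4 * (-β) * l1 * l2 ≤ 1) :
    Faux c β l2 < Faux c β l1 := by
  have h2 : 0 < l2 := h1.trans h12
  have hE1 : 0 < Real.exp (2 * Real.pi * l1) - 1 := exp_sub_one_pos (by positivity)
  have hE2 : 0 < Real.exp (2 * Real.pi * l2) - 1 := exp_sub_one_pos (by positivity)
  have ha : (1:ℝ) < Real.exp (c / 2) := by rw [Real.one_lt_exp_iff]; positivity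
  have hEE : Real.exp (2 * Real.pi * l1) < Real.exp (2 * Real.pi * l2) := by
    apply Real.exp_lt_exp.2; nlinarith [Real.pi_pos]
  set a := Real.exp (c / 2)
  set E1 := Real.exp (2 * Real.pi * l1)
  set E2 := Real.exp (2 * Real.pi * l2)
  have hu2pos : 0 < (1 - 4 * β * l2 ^ 2) / (2 * l2) := by
    apply div_pos (by nlinarith) (by positivity)
  have hu : (1 - 4 * β * l2 ^ 2) / (2 * l2) ≤ (1 - 4 * β * l1 ^ 2) / (2 * l1) := by
    rw [div_le_div_iff₀ (by positivity) (by positivity)]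
    nlinarith
  have hh2pos : 0 < (a * E2 - 1) / (E2 - 1) := by
    apply div_pos (by nlinarith) hE2
  have hh : (a * E2 - 1) / (E2 - 1) < (a * E1 - 1) / (E1 - 1) := by
    rw [div_lt_div_iff₀ hE2 hE1]
    nlinarith
  rw [Faux_split h1, Faux_split h2]
  calc (1 - 4 * β * l2 ^ 2) / (2 * l2) * ((a * E2 - 1) / (E2 - 1))
      < (1 - 4 * β * l2 ^ 2) / (2 * l2) * ((a * E1 - 1) / (E1 - 1)) := by
        exact mul_lt_mul_of_pos_left hh hu2pos
    _ ≤ (1 - 4 * β * l1 ^ 2) / (2 * l1) * ((a * E1 - 1) / (E1 - 1)) := by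
        apply mul_le_mul_of_nonneg_right hu (hh2pos.trans hh).le

lemma hasDerivAt_Faux (c β : ℝ) {lam : ℝ} (hl : 0 < lam) :
    HasDerivAt (Faux c β)
      ((((-8 * β * lam) * (Real.exp (c / 2) * Real.exp (2 * Real.pi * lam) - 1)
          + (1 - 4 * β * lam ^ 2) * (Real.exp (c / 2) * (Real.exp (2 * Real.pi * lam) * (2 * Real.pi))))
          * (2 * lam * (Real.exp (2 * Real.pi * lam) - 1))
        - (1 - 4 * β * lam ^ 2) * (Real.exp (c / 2) * Real.exp (2 * Real.pi * lam) - 1)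
          * (2 * (Real.exp (2 * Real.pi * lam) - 1) + 2 * lam * (Real.exp (2 * Real.pi * lam) * (2 * Real.pi))))
        / (2 * lam * (Real.exp (2 * Real.pi * lam) - 1)) ^ 2) lam := by
  have hP : 0 < Real.exp (2 * Real.pi * lam) - 1 := exp_sub_one_pos (by positivity)
  have hexp : HasDerivAt (fun x : ℝ => Real.exp (2 * Real.pi * x))
      (Real.exp (2 * Real.pi * lam) * (2 * Real.pi)) lam := by
    simpa using (HasDerivAt.exp ((hasDerivAt_id lam).const_mul (2 * Real.pi)))
  have hnum : HasDerivAt (fun x : ℝ => (1 - 4 * β * x ^ 2) * (Real.exp (c / 2) * Real.exp (2 * Real.pi * x) - 1))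
      ((-8 * β * lam) * (Real.exp (c / 2) * Real.exp (2 * Real.pi * lam) - 1)
        + (1 - 4 * β * lam ^ 2) * (Real.exp (c / 2) * (Real.exp (2 * Real.pi * lam) * (2 * Real.pi)))) lam := by
    have h1 : HasDerivAt (fun x : ℝ => 1 - 4 * β * x ^ 2) (-8 * β * lam) lam := by
      have := ((hasDerivAt_pow 2 lam).const_mul (4 * β)).const_sub 1
      simpa using this.congr_deriv (by ring)
    have h2 : HasDerivAt (fun x : ℝ => Real.exp (c / 2) * Real.exp (2 * Real.pi * x) - 1)
        (Real.exp (c / 2) * (Real.exp (2 * Real.pi * lam) * (2 * Real.pi))) lam :=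
      (hexp.const_mul (Real.exp (c / 2))).sub_const 1
    exact h1.mul h2
  have hden : HasDerivAt (fun x : ℝ => 2 * x * (Real.exp (2 * Real.pi * x) - 1))
      (2 * (Real.exp (2 * Real.pi * lam) - 1) + 2 * lam * (Real.exp (2 * Real.pi * lam) * (2 * Real.pi))) lam := by
    have h1 : HasDerivAt (fun x : ℝ => 2 * x) 2 lam := by
      simpa using (hasDerivAt_id lam).const_mul 2
    exact h1.mul (hexp.sub_const 1)
  exact hnum.div hden (by positivity)

set_option maxHeartbeats 1600000 in
lemma right_mono {c β : ℝ} (hc : 0 < c) (hβ : β < 0) :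
    StrictMonoOn (Faux c β) (Set.Ici (3 + 3 / (-β))) := by
  have hb : 0 < -β := by linarith
  have hM : 0 < 3 + 3 / (-β) := by positivity
  apply strictMonoOn_of_deriv_pos (convex_Ici _)
  · intro x hx
    exact (hasDerivAt_Faux c β (lt_of_lt_of_le hM hx)).continuousAt.continuousWithinAt
  · intro x hx
    rw [interior_Ici] at hx
    have hxp : 0 < x := hM.trans hx
    rw [(hasDerivAt_Faux c β hxp).deriv]
    have hP : 0 < Real.exp (2 * Real.pi * x) - 1 := exp_sub_one_pos (by positivity)
    set a := Real.exp (c / 2) with ha_def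
    set E := Real.exp (2 * Real.pi * x) with hE_def
    clear_value a E
    have ha : 1 < a := by rw [ha_def, Real.one_lt_exp_iff]; positivity
    have hE1 : 1 < E := by linarith
    -- numerator equals the simplified form
    have key : (((-8 * β * x) * (a * E - 1) + (1 - 4 * β * x ^ 2) * (a * (E * (2 * Real.pi))))
          * (2 * x * (E - 1))
        - (1 - 4 * β * x ^ 2) * (a * E - 1) * (2 * (E - 1) + 2 * x * (E * (2 * Real.pi))))
        = 2 * ((E - 1) * (a * E - 1) * ((-4 * β) * x ^ 2 - 1)
            - 2 * Real.pi * x * (a - 1) * E * (1 - 4 * β * x ^ 2)) := by ring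
    rw [key]
    apply div_pos _ (by positivity)
    -- bounds
    have hx3 : 3 ≤ x := by
      have : 0 ≤ 3 / (-β) := by positivity
      linarith [(Set.mem_Ioi.1 hx).le]
    have hbx : 3 ≤ (-β) * x := by
      have h1 : 3 / (-β) ≤ x := by linarith [(Set.mem_Ioi.1 hx).le]
      have h2 := mul_le_mul_of_nonneg_left h1 hb.le
      rwa [mul_div_cancel₀ _ (ne_of_gt hb)] at h2
    -- E ≥ (π x / 2)^4
    have hE4 : (Real.pi * x / 2) ^ 4 ≤ E := by
      have h1 : Real.exp (2 * Real.pi * x) = (Real.exp (Real.pi * x / 2)) ^ 4 := by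
        rw [← Real.exp_nat_mul]; norm_num; ring_nf
      rw [hE_def, h1]
      have h2 : Real.pi * x / 2 ≤ Real.exp (Real.pi * x / 2) := by
        linarith [Real.add_one_le_exp (Real.pi * x / 2)]
      exact pow_le_pow_left₀ (by positivity) h2 4
    have h3 : (3:ℝ) < Real.pi := Real.pi_gt_three
    have h9 : (9:ℝ) < Real.pi ^ 2 := by nlinarith
    have h16 : (16:ℝ) ≤ Real.pi ^ 3 := by nlinarith
    have hA : Real.pi * x ^ 4 ≤ E := by
      have h0 : 0 ≤ (Real.pi * x ^ 4) * (Real.pi ^ 3 - 16) :=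
        mul_nonneg (by positivity) (by linarith)
      nlinarith [hE4]
    have hx27 : (27:ℝ) ≤ x ^ 3 := by nlinarith
    have hx81 : (81:ℝ) ≤ x ^ 4 := by nlinarith [pow_pos hxp 3]
    have q1 : 8 * ((-β) * x ^ 3) < (-β) * x ^ 6 / 2 := by
      have := mul_pos (show (0:ℝ) < (-β) * x ^ 3 by positivity)
        (show (0:ℝ) < x ^ 3 - 16 by linarith)
      nlinarith
    have q2 : (3 / 2) * x ^ 5 ≤ (-β) * x ^ 6 / 2 := by
      have := mul_nonneg (show (0:ℝ) ≤ (-β) * x - 3 by linarith)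
        (show (0:ℝ) ≤ x ^ 5 by positivity)
      nlinarith
    have q3 : 2 * x ≤ (3 / 2) * x ^ 5 := by
      have := mul_nonneg (show (0:ℝ) ≤ (3 / 2) * x ^ 4 - 2 by linarith) hxp.le
      nlinarith
    have hB : 2 * x + 8 * ((-β) * x ^ 3) < (-β) * x ^ 6 := by linarith
    have hC : 2 * Real.pi * x * (1 + 4 * (-β) * x ^ 2) < E * ((-β) * x ^ 2) := by
      have h1 : Real.pi * ((-β) * x ^ 6) ≤ E * ((-β) * x ^ 2) := by
        calc Real.pi * ((-β) * x ^ 6) = (Real.pi * x ^ 4) * ((-β) * x ^ 2) := by ring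
          _ ≤ E * ((-β) * x ^ 2) := by
              apply mul_le_mul_of_nonneg_right hA (by positivity)
      nlinarith [Real.pi_pos]
    -- assemble
    have e1 : (E / 2) * ((a - 1) * E) * (2 * ((-β) * x ^ 2)) ≤
        (E - 1) * (a * E - 1) * ((-4 * β) * x ^ 2 - 1) := by
      have f1 : E / 2 ≤ E - 1 := by
        have h4 : (4:ℝ) ≤ Real.pi * x / 2 := by nlinarith [Real.pi_gt_three]
        have := pow_le_pow_left₀ (show (0:ℝ) ≤ 4 by norm_num) h4 4
        have h256 : (256:ℝ) ≤ E := by nlinarith [hE4]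
        linarith
      have f2 : (a - 1) * E ≤ a * E - 1 := by nlinarith
      have f3 : 2 * ((-β) * x ^ 2) ≤ (-4 * β) * x ^ 2 - 1 := by nlinarith
      have g2 : (0:ℝ) ≤ (a - 1) * E := by nlinarith
      have g3 : (0:ℝ) ≤ 2 * ((-β) * x ^ 2) := by positivity
      have h12 : E / 2 * ((a - 1) * E) ≤ (E - 1) * (a * E - 1) :=
        mul_le_mul f1 f2 g2 (by linarith)
      exact mul_le_mul h12 f3 g3 (mul_nonneg (by linarith) (by nlinarith))
    have e2 : 2 * Real.pi * x * (a - 1) * E * (1 - 4 * β * x ^ 2) <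
        (E / 2) * ((a - 1) * E) * (2 * ((-β) * x ^ 2)) := by
      have h1 : (0:ℝ) < (a - 1) * E := by nlinarith
      calc 2 * Real.pi * x * (a - 1) * E * (1 - 4 * β * x ^ 2)
          = ((a - 1) * E) * (2 * Real.pi * x * (1 + 4 * (-β) * x ^ 2)) := by ring
        _ < ((a - 1) * E) * (E * ((-β) * x ^ 2)) := by
            exact mul_lt_mul_of_pos_left hC h1
        _ = (E / 2) * ((a - 1) * E) * (2 * ((-β) * x ^ 2)) := by ring
    linarith [e1, e2]

noncomputable def Gaux (c β lam : ℝ) : ℝ :=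
  2 * lam ^ 2 / (1 - 4 * β * lam ^ 2) *
    ((Real.exp (2 * Real.pi * lam) - 1) / (Real.exp (c / 2) * Real.exp (2 * Real.pi * lam) - 1))

noncomputable def Haux (c β lam : ℝ) : ℝ :=
  (lam / (Real.exp (2 * Real.pi * lam) - 1)) *
    ((1 - 4 * β * lam ^ 2) * (Real.exp (c / 2) * Real.exp (2 * Real.pi * lam) - 1) / 2)

lemma Gaux_eq {c β : ℝ} (hc : 0 < c) (hβ : β < 0) {lam : ℝ} (hl : 0 < lam) :
    lam / Faux c β lam = Gaux c β lam := by
  have hP : 0 < Real.exp (2 * Real.pi * lam) - 1 := exp_sub_one_pos (by positivity)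
  have hQ := aE_sub_one_pos hc hl
  have hN : 0 < 1 - 4 * β * lam ^ 2 := by nlinarith
  unfold Faux Gaux
  field_simp

lemma Haux_eq {c β : ℝ} (hc : 0 < c) {lam : ℝ} (hl : 0 < lam) :
    lam ^ 2 * Faux c β lam = Haux c β lam := by
  have hP : 0 < Real.exp (2 * Real.pi * lam) - 1 := exp_sub_one_pos (by positivity)
  unfold Faux Haux
  field_simp

lemma Gaux_lim {c β : ℝ} (hc : 0 < c) (hβ : β < 0) :
    Tendsto (Gaux c β) atTop (nhds (Real.exp (-(c / 2)) / (2 * |β|))) := by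
  have ha : (1:ℝ) < Real.exp (c / 2) := by rw [Real.one_lt_exp_iff]; positivity
  have t1 : Tendsto (fun lam : ℝ => 2 * lam ^ 2 / (1 - 4 * β * lam ^ 2)) atTop
      (nhds (1 / (2 * (-β)))) := by
    have h0 : Tendsto (fun lam : ℝ => 1 / lam ^ 2) atTop (nhds 0) := by
      simpa [one_div, Function.comp_def] using
        tendsto_inv_atTop_zero.comp (tendsto_pow_atTop (n := 2) two_ne_zero)
    have h1 : Tendsto (fun lam : ℝ => 2 / (1 / lam ^ 2 - 4 * β)) atTop
        (nhds (2 / (0 - 4 * β))) :=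
      tendsto_const_nhds.div (h0.sub tendsto_const_nhds) (by linarith)
    have h2 : (2 : ℝ) / (0 - 4 * β) = 1 / (2 * (-β)) := by field_simp; ring
    rw [h2] at h1
    apply h1.congr'
    filter_upwards [eventually_gt_atTop 0] with lam hl
    have : (0:ℝ) < lam ^ 2 := by positivity
    field_simp
  have t2 : Tendsto (fun lam : ℝ => (Real.exp (2 * Real.pi * lam) - 1) /
      (Real.exp (c / 2) * Real.exp (2 * Real.pi * lam) - 1)) atTop
      (nhds (1 / Real.exp (c / 2))) := by
    have hu : Tendsto (fun lam : ℝ => Real.exp (-(2 * Real.pi * lam))) atTop (nhds 0) :=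
      Real.tendsto_exp_neg_atTop_nhds_zero.comp
        (tendsto_id.const_mul_atTop (by positivity : (0:ℝ) < 2 * Real.pi))
    have h1 : Tendsto (fun lam : ℝ => (1 - Real.exp (-(2 * Real.pi * lam))) /
        (Real.exp (c / 2) - Real.exp (-(2 * Real.pi * lam)))) atTop
        (nhds ((1 - 0) / (Real.exp (c / 2) - 0))) :=
      (tendsto_const_nhds.sub hu).div (tendsto_const_nhds.sub hu) (by simp)
    simp only [sub_zero] at h1
    apply h1.congr'
    filter_upwards [eventually_gt_atTop 0] with lam hl
    have hE : (0:ℝ) < Real.exp (2 * Real.pi * lam) := Real.exp_pos _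
    have hP : 0 < Real.exp (2 * Real.pi * lam) - 1 := exp_sub_one_pos (by positivity)
    have hQ := aE_sub_one_pos hc hl
    have hE1 : (1:ℝ) < Real.exp (2 * Real.pi * lam) := by linarith
    have hinv : (Real.exp (2 * Real.pi * lam))⁻¹ < 1 := by
      rw [inv_lt_one_iff₀]; right; exact hE1
    have ha : (1:ℝ) < Real.exp (c / 2) := by rw [Real.one_lt_exp_iff]; positivity
    have hd : Real.exp (c / 2) - (Real.exp (2 * Real.pi * lam))⁻¹ ≠ 0 := by
      have : (Real.exp (2 * Real.pi * lam))⁻¹ < Real.exp (c / 2) := hinv.trans ha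
      linarith
    rw [Real.exp_neg, div_eq_div_iff hd hQ.ne']
    field_simp
  have := t1.mul t2
  convert this using 2
  · rfl
  rw [Real.exp_neg, abs_of_neg hβ]
  field_simp

lemma Haux_lim {c β : ℝ} (hc : 0 < c) :
    Tendsto (Haux c β) (nhdsWithin 0 (Set.Ioi 0))
      (nhds ((Real.exp (c / 2) - 1) / (4 * Real.pi))) := by
  have hslope : Tendsto (fun lam : ℝ => (Real.exp (2 * Real.pi * lam) - 1) / lam)
      (nhdsWithin 0 (Set.Ioi 0)) (nhds (2 * Real.pi)) := by
    have hd : HasDerivAt (fun x : ℝ => Real.exp (2 * Real.pi * x)) (2 * Real.pi) 0 := by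
      simpa using (HasDerivAt.exp ((hasDerivAt_id (0:ℝ)).const_mul (2 * Real.pi)))
    have := hasDerivAt_iff_tendsto_slope.mp hd
    have h2 : Tendsto (slope (fun x : ℝ => Real.exp (2 * Real.pi * x)) 0)
        (nhdsWithin 0 (Set.Ioi 0)) (nhds (2 * Real.pi)) :=
      this.mono_left (nhdsWithin_mono _ (fun x hx => ne_of_gt hx))
    apply h2.congr'
    filter_upwards [self_mem_nhdsWithin] with lam hl
    simp [slope, hl, div_eq_inv_mul]
  have h1 : Tendsto (fun lam : ℝ => lam / (Real.exp (2 * Real.pi * lam) - 1))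
      (nhdsWithin 0 (Set.Ioi 0)) (nhds ((2 * Real.pi)⁻¹)) := by
    have := hslope.inv₀ (by positivity)
    apply this.congr'
    filter_upwards [self_mem_nhdsWithin] with lam (hl : 0 < lam)
    rw [inv_div]
  have h2 : Tendsto (fun lam : ℝ => (1 - 4 * β * lam ^ 2) *
      (Real.exp (c / 2) * Real.exp (2 * Real.pi * lam) - 1) / 2)
      (nhdsWithin 0 (Set.Ioi 0)) (nhds ((Real.exp (c / 2) - 1) / 2)) := by
    have hcont : ContinuousAt (fun lam : ℝ => (1 - 4 * β * lam ^ 2) *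
        (Real.exp (c / 2) * Real.exp (2 * Real.pi * lam) - 1) / 2) 0 := by
      fun_prop
    have h2' := hcont.tendsto.mono_left
      (nhdsWithin_le_nhds (s := Set.Ioi (0:ℝ)))
    convert h2' using 2
    simp
  have hval : (Real.exp (c / 2) - 1) / (4 * Real.pi)
      = (2 * Real.pi)⁻¹ * ((Real.exp (c / 2) - 1) / 2) := by
    rw [inv_mul_eq_div, div_div]
    ring_nf
  unfold Haux
  rw [hval]
  exact h1.mul h2

theorem rotating_waves_stmt_11 (c β : ℝ) (hc : 0 < c) (hβ : β < 0)
    (Ω : ℝ) (hΩ : IsLeast (fCB c β '' Set.Ioi 0) Ω)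
    (llow lbar : ℝ → ℝ)
    (hsol : ∀ g : ℝ, Ω < g →
      0 < llow g ∧ llow g < lbar g ∧ fCB c β (llow g) = g ∧ fCB c β (lbar g) = g) :
    Filter.Tendsto (fun g => lbar g / g) Filter.atTop
      (nhds (Real.exp (-(c / 2)) / (2 * |β|))) ∧
    Filter.Tendsto (fun g => Real.sqrt g * llow g) Filter.atTop
      (nhds ((1 / 2) * Real.sqrt ((Real.exp (c / 2) - 1) / Real.pi))) := by
  have hb : 0 < -β := by linarith
  set δ : ℝ := 1 / (2 * Real.sqrt (-β)) with hδdef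
  have hsq : Real.sqrt (-β) * Real.sqrt (-β) = -β := Real.mul_self_sqrt hb.le
  have hs : 0 < Real.sqrt (-β) := Real.sqrt_pos.mpr hb
  have hδpos : 0 < δ := by rw [hδdef]; positivity
  have hδsq : 4 * (-β) * δ * δ = 1 := by
    rw [hδdef]
    field_simp
    nlinarith [hsq]
  set M : ℝ := 3 + 3 / (-β) with hMdef
  have hMpos : 0 < M := by rw [hMdef]; positivity
  have hδleM : δ ≤ M := by
    rcases le_or_gt (Real.sqrt (-β)) 6 with hcase | hcase
    · have h1 : δ ≤ 3 / (-β) := by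
        rw [hδdef, div_le_div_iff₀ (by positivity) hb]
        nlinarith [hsq, hs]
      have h2 : (0:ℝ) < 3 / (-β) := by positivity
      rw [hMdef]; linarith
    · have h1 : δ ≤ 1 / 12 := by
        rw [hδdef, div_le_div_iff₀ (by positivity) (by norm_num : (0:ℝ) < 12)]
        nlinarith
      have h2 : (0:ℝ) ≤ 3 / (-β) := by positivity
      rw [hMdef]; linarith
  have key8 : ∀ g : ℝ, Ω < g → 0 < llow g ∧ llow g < lbar g ∧
      Faux c β (llow g) = g ∧ Faux c β (lbar g) = g := by
    intro g hg
    obtain ⟨h1, h2, h3, h4⟩ := hsol g hg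
    exact ⟨h1, h2, by rw [← fCB_eq hc h1]; exact h3,
      by rw [← fCB_eq hc (h1.trans h2)]; exact h4⟩
  have hbound : ∀ p q : ℝ, 0 < p → p ≤ q → ∃ C, ∀ x ∈ Set.Icc p q, Faux c β x ≤ C := by
    intro p q hp hpq
    have hcont : ContinuousOn (Faux c β) (Set.Icc p q) := fun x hx =>
      ((hasDerivAt_Faux c β (lt_of_lt_of_le hp hx.1)).continuousAt).continuousWithinAt
    obtain ⟨C, hC⟩ := (isCompact_Icc).exists_bound_of_continuousOn hcont
    refine ⟨C, fun x hx => ?_⟩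
    have := hC x hx
    rw [Real.norm_eq_abs] at this
    exact (le_abs_self _).trans this
  -- lbar tends to infinity
  have hlbar_top : Tendsto lbar atTop atTop := by
    rw [tendsto_atTop]
    intro K
    set Q : ℝ := max K M with hQdef
    have hδQ : δ ≤ Q := le_trans hδleM (le_max_right _ _)
    obtain ⟨C, hC⟩ := hbound δ Q hδpos hδQ
    filter_upwards [eventually_gt_atTop (max Ω C)] with g hg
    have hgΩ : Ω < g := lt_of_le_of_lt (le_max_left _ _) hg
    have hgC : C < g := lt_of_le_of_lt (le_max_right _ _) hg
    obtain ⟨h1, h2, h3, h4⟩ := key8 g hgΩ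
    by_contra hK
    push_neg at hK
    have hlbQ : lbar g ≤ Q := le_trans hK.le (le_max_left _ _)
    have hnotin : lbar g < δ := by
      by_contra hge
      push_neg at hge
      have := hC (lbar g) ⟨hge, hlbQ⟩
      rw [h4] at this
      linarith
    have hprod : llow g * lbar g ≤ δ * δ := by nlinarith
    have hsm : 4 * (-β) * llow g * lbar g ≤ 1 := by nlinarith
    have := left_anti hc hβ h1 h2 hsm
    rw [h3, h4] at this
    exact lt_irrefl g this
  -- llow tends to 0 from the right
  have hlow_zero : Tendsto llow atTop (nhdsWithin 0 (Set.Ioi 0)) := by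
    rw [tendsto_nhdsWithin_iff]
    constructor
    · rw [tendsto_order]
      constructor
      · intro a ha
        filter_upwards [eventually_gt_atTop Ω] with g hg
        exact lt_trans ha (key8 g hg).1
      · intro ε hε
        set ε' : ℝ := min ε δ with hε'def
        have hε'pos : 0 < ε' := lt_min hε hδpos
        have hε'M : ε' ≤ M := le_trans (min_le_right _ _) hδleM
        obtain ⟨C, hC⟩ := hbound ε' M hε'pos hε'M
        filter_upwards [eventually_gt_atTop (max Ω C)] with g hg
        have hgΩ : Ω < g := lt_of_le_of_lt (le_max_left _ _) hg
        have hgC : C < g := lt_of_le_of_lt (le_max_right _ _) hg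
        obtain ⟨h1, h2, h3, h4⟩ := key8 g hgΩ
        by_contra hge
        push_neg at hge
        have hεle : ε' ≤ llow g := le_trans (min_le_left _ _) hge
        rcases le_or_gt (llow g) M with hcase | hcase
        · have := hC (llow g) ⟨hεle, hcase⟩
          rw [h3] at this
          linarith
        · have := right_mono hc hβ (Set.mem_Ici.2 hcase.le)
            (Set.mem_Ici.2 (hcase.le.trans h2.le)) h2
          rw [h3, h4] at this
          exact lt_irrefl g this
    · filter_upwards [eventually_gt_atTop Ω] with g hg
      exact Set.mem_Ioi.2 (key8 g hg).1
  constructor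
  · -- first limit
    have hG := (Gaux_lim hc hβ).comp hlbar_top
    apply hG.congr'
    filter_upwards [eventually_gt_atTop Ω] with g hg
    obtain ⟨h1, h2, h3, h4⟩ := key8 g hg
    show Gaux c β (lbar g) = lbar g / g
    rw [← Gaux_eq hc hβ (h1.trans h2), h4]
  · -- second limit
    have hH := (Haux_lim (β := β) hc).comp hlow_zero
    have hsqrt := (Real.continuous_sqrt.tendsto _).comp hH
    have hval2 : Real.sqrt ((Real.exp (c / 2) - 1) / (4 * Real.pi))
        = 1 / 2 * Real.sqrt ((Real.exp (c / 2) - 1) / Real.pi) := by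
      rw [show (Real.exp (c / 2) - 1) / (4 * Real.pi)
        = (1 / 4) * ((Real.exp (c / 2) - 1) / Real.pi) by ring]
      rw [Real.sqrt_mul (by norm_num) _]
      rw [show (1 / 4 : ℝ) = (1 / 2) ^ 2 by norm_num, Real.sqrt_sq (by norm_num)]
    rw [hval2] at hsqrt
    apply hsqrt.congr'
    filter_upwards [eventually_gt_atTop (max Ω 0)] with g hg
    have hgΩ : Ω < g := lt_of_le_of_lt (le_max_left _ _) hg
    have hg0 : 0 < g := lt_of_le_of_lt (le_max_right _ _) hg
    obtain ⟨h1, h2, h3, h4⟩ := key8 g hgΩ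
    show Real.sqrt (Haux c β (llow g)) = Real.sqrt g * llow g
    rw [← Haux_eq hc h1, h3, mul_comm, Real.sqrt_mul hg0.le, Real.sqrt_sq h1.le]
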